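/- Let K be a compact Hausdorff space, φ a homeomorphism of K onto itself, w ∈ C(K), and T the operator (Tf)(k) = w(k) f(φ(k)) on C(K). Let k ∈ K be a φ-periodic point of smallest period p that is isolated in K, and suppose λ^p = w_p(k), where w_p = w · (w∘φ) ⋯ (w∘φ^{p−1}) and λ ≠ 0. Then λ is an eigenvalue of T: there exists a nonzero f ∈ C(K) with Tf = λf, supported on the finite orbit {k, φ(k), …, φ^{p−1}(k)}. -/

import Mathlib

open Finset in
/-- If `k` is an isolated `φ`-periodic point of smallest period `p` and
`λ^p = w_p(k)` with `λ ≠ 0`, then `λ` is an eigenvalue of the weighted composition operator `T`,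
with an eigenfunction supported on the finite orbit of `k`. -/
theorem stmt9 {K : Type*} [TopologicalSpace K] [CompactSpace K] [T2Space K]
    (φ : K ≃ₜ K) (w : C(K, ℂ))
    (T : C(K, ℂ) →L[ℂ] C(K, ℂ))
    (hT : ∀ f : C(K, ℂ), ∀ k : K, T f k = w k * f (φ k))
    (k : K) (hiso : IsOpen ({k} : Set K))
    (p : ℕ) (hp : 1 ≤ p) (hper : φ^[p] k = k)
    (hmin : ∀ q : ℕ, 1 ≤ q → q < p → φ^[q] k ≠ k)
    (lam : ℂ) (hlam : lam ≠ 0)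
    (heig : lam ^ p = ∏ i ∈ Finset.range p, w (φ^[i] k)) :
    ∃ f : C(K, ℂ), f ≠ 0 ∧ T f = lam • f ∧
      ∀ x : K, (∀ i : ℕ, i < p → x ≠ φ^[i] k) → f x = 0 := by
  classical
  -- each orbit point is isolated
  have hiso' : ∀ i : ℕ, IsOpen ({φ^[i] k} : Set K) := by
    intro i
    induction i with
    | zero => simpa using hiso
    | succ n ih =>
        have h1 : ({φ^[n+1] k} : Set K) = φ '' {φ^[n] k} := by
          rw [Set.image_singleton, Function.iterate_succ_apply']
        rw [h1]
        exact φ.isOpenMap _ ih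
  -- weights nonzero along the orbit
  have hprodne : (∏ i ∈ range p, w (φ^[i] k)) ≠ 0 := by
    rw [← heig]; exact pow_ne_zero _ hlam
  have hw : ∀ j < p, w (φ^[j] k) ≠ 0 := by
    intro j hj
    have := Finset.prod_ne_zero_iff.mp hprodne j (Finset.mem_range.mpr hj)
    exact this
  have hprodne' : ∀ i, i ≤ p → (∏ j ∈ range i, w (φ^[j] k)) ≠ 0 := by
    intro i hi
    refine Finset.prod_ne_zero_iff.mpr fun j hj => hw j ?_
    exact lt_of_lt_of_le (Finset.mem_range.mp hj) hi
  -- orbit points are distinct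
  have hdist : ∀ i j, i < p → j < p → φ^[i] k = φ^[j] k → i = j := by
    have key : ∀ i j, i ≤ j → j < p → φ^[i] k = φ^[j] k → i = j := by
      intro i j hij hjp h
      have hinj : Function.Injective (φ^[i]) := φ.injective.iterate i
      have h2 : φ^[j] k = φ^[i] (φ^[j - i] k) := by
        rw [← Function.iterate_add_apply]
        congr 1; omega
      have h3 : φ^[j - i] k = k := (hinj (by rw [← h2, ← h])).symm
      by_contra hne
      exact hmin (j - i) (by omega) (by omega) h3
    intro i j hi hj h
    rcases le_total i j with hle | hle
    · exact key i j hle hj h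
    · exact (key j i hle hi h.symm).symm
  -- the coefficients
  set c : ℕ → ℂ := fun i => lam ^ i / ∏ j ∈ range i, w (φ^[j] k) with hc
  -- the eigenfunction
  set f : C(K, ℂ) := ⟨fun x => ∑ i ∈ range p, if x = φ^[i] k then c i else 0, by
    apply continuous_finset_sum
    intro i _
    have hco : IsClopen ({x : K | x = φ^[i] k}) := by
      have : {x : K | x = φ^[i] k} = {φ^[i] k} := by ext; simp
      rw [this]; exact ⟨isClosed_singleton, hiso' i⟩
    apply continuous_if _ continuousOn_const continuousOn_const
    intro a ha
    rw [hco.frontier_eq] at ha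
    exact absurd ha (Set.notMem_empty a)⟩ with hf
  have hfval : ∀ j < p, f (φ^[j] k) = c j := by
    intro j hj
    show (∑ i ∈ range p, if φ^[j] k = φ^[i] k then c i else 0) = c j
    rw [Finset.sum_eq_single j]
    · simp
    · intro i hi hne
      rw [if_neg fun h => hne (hdist j i hj (Finset.mem_range.mp hi) h).symm]
    · intro h; exact absurd (Finset.mem_range.mpr hj) h
  have hfzero : ∀ x : K, (∀ i : ℕ, i < p → x ≠ φ^[i] k) → f x = 0 := by
    intro x hx
    show (∑ i ∈ range p, if x = φ^[i] k then c i else 0) = 0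
    apply Finset.sum_eq_zero
    intro i hi
    rw [if_neg (hx i (Finset.mem_range.mp hi))]
  refine ⟨f, ?_, ?_, hfzero⟩
  · intro h0
    have h1 : f (φ^[0] k) = c 0 := hfval 0 (by omega)
    rw [h0] at h1
    simp [hc] at h1
  · ext x
    rw [hT]
    show w x * f (φ x) = lam * f x
    by_cases hx : ∃ j, j < p ∧ x = φ^[j] k
    · obtain ⟨j, hj, rfl⟩ := hx
      have hφx : φ (φ^[j] k) = φ^[j+1] k := (Function.iterate_succ_apply' φ j k).symm
      rw [hφx, hfval j hj]
      by_cases hjp : j + 1 < p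
      · rw [hfval (j+1) hjp]
        have h1 : w (φ^[j] k) ≠ 0 := hw j hj
        have h2 := hprodne' j (by omega)
        simp only [hc]
        rw [Finset.prod_range_succ]
        field_simp
        ring
      · have hjp1 : j + 1 = p := by omega
        have : φ^[j+1] k = φ^[0] k := by rw [hjp1, hper]; simp
        rw [this, hfval 0 (by omega)]
        simp only [hc]
        have h2 := hprodne' j (by omega)
        have h3 : lam * (lam ^ j / ∏ i ∈ range j, w (φ^[i] k))
            = lam ^ p / ∏ i ∈ range j, w (φ^[i] k) := by
          rw [← hjp1, pow_succ]; ring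
        rw [h3, heig, ← hjp1, Finset.prod_range_succ]
        field_simp
        simp
    · push_neg at hx
      have hfx : f x = 0 := hfzero x hx
      have hfφx : f (φ x) = 0 := by
        apply hfzero
        intro i hi h
        rcases Nat.eq_zero_or_pos i with rfl | hi0
        · simp only [Function.iterate_zero, id] at h
          have : φ x = φ (φ^[p-1] k) := by
            have e : φ ((⇑φ)^[p-1] k) = (⇑φ)^[p-1+1] k :=
              (Function.iterate_succ_apply' φ (p-1) k).symm
            rw [e]
            have e2 : p - 1 + 1 = p := by omega
            rw [e2, hper, h]
          exact hx (p-1) (by omega) (φ.injective this)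
        · obtain ⟨m, rfl⟩ : ∃ m, i = m + 1 := ⟨i - 1, by omega⟩
          rw [Function.iterate_succ_apply'] at h
          exact hx m (by omega) (φ.injective h)
      rw [hfx, hfφx, mul_zero, mul_zero]
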